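/- Let I be a real symmetric positive definite 3×3 matrix and a ∈ ℝ³ a nonzero eigenvector of I, i.e. Ia = ρa for some ρ ∈ ℝ. Let ω : ℝ → ℝ³ be differentiable and λ : ℝ → ℝ be such that I ω′(t) + ω(t) × (I ω(t)) = λ(t)·a and ⟨a, ω(t)⟩ = 0 for all t. Then ω is constant: ω(t) = ω(0) for all t. In particular, every motion of the Suslov top is a steady rotation in this case. -/

import Mathlib

open Matrix

/-- If the constraint vector `a` of the Suslov system is an
eigenvector of the inertia tensor `I` (i.e. `Ia = ρ a`), then every solution of
`I ω̇ + ω × (Iω) = λ(t) a`, `⟨a, ω⟩ = 0` is constant: every motion of the Suslov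
top is a steady rotation. -/
theorem suslov_eigenvector_case_all_motions_steady
    (I : Matrix (Fin 3) (Fin 3) ℝ) (hsymm : I.IsSymm) (hpd : I.PosDef)
    (a : Fin 3 → ℝ) (ha : a ≠ 0) (ρ : ℝ) (hEig : I.mulVec a = ρ • a)
    (ω : ℝ → Fin 3 → ℝ) (lam : ℝ → ℝ)
    (hdiff : Differentiable ℝ ω)
    (heq : ∀ t : ℝ,
      I.mulVec (deriv ω t) + crossProduct (ω t) (I.mulVec (ω t)) = lam t • a)
    (hcon : ∀ t : ℝ, a ⬝ᵥ ω t = 0) :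
    ∀ t : ℝ, ω t = ω 0 := by
  have hderiv0 : ∀ t : ℝ, deriv ω t = 0 := by
    intro t
    set d := deriv ω t with hd
    -- derivative of the constraint: a ⬝ᵥ d = 0
    have hda : a ⬝ᵥ d = 0 := by
      have h1 : HasDerivAt (fun s => a ⬝ᵥ ω s) (a ⬝ᵥ d) t := by
        have := (hdiff t).hasDerivAt
        have hi : ∀ i, HasDerivAt (fun s => ω s i) (d i) t :=
          hasDerivAt_pi.1 this
        have : HasDerivAt (fun s => ∑ i, a i * ω s i) (∑ i, a i * d i) t :=
          HasDerivAt.fun_sum fun i _ => (hi i).const_mul (a i)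
        simpa [dotProduct] using this
      have h2 : HasDerivAt (fun s => a ⬝ᵥ ω s) 0 t := by
        have : (fun s => a ⬝ᵥ ω s) = fun _ => (0 : ℝ) := funext hcon
        rw [this]; exact hasDerivAt_const t 0
      exact h1.unique h2
    -- a is orthogonal to I ω t as well (symmetry + eigenvector)
    have haIω : I.mulVec (ω t) ⬝ᵥ a = 0 := by
      have : I.mulVec (ω t) ⬝ᵥ a = ω t ⬝ᵥ I.mulVec a := by
        rw [dotProduct_comm, Matrix.dotProduct_mulVec, ← Matrix.mulVec_transpose,
          hsymm.eq]
        exact dotProduct_comm _ _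
      rw [this, hEig, dotProduct_smul, dotProduct_comm, hcon t, smul_zero]
    -- triple product vanishes: d, ω t, I ω t all lie in a plane (⊥ a)
    have hdet : Matrix.det ![d, ω t, I.mulVec (ω t)] = 0 := by
      apply Matrix.exists_mulVec_eq_zero_iff.1
      refine ⟨a, ha, ?_⟩
      funext i
      fin_cases i
      · simpa [Matrix.mulVec, dotProduct_comm] using hda
      · simpa [Matrix.mulVec, dotProduct_comm] using hcon t
      · exact haIω
    have htriple : d ⬝ᵥ crossProduct (ω t) (I.mulVec (ω t)) = 0 := by
      rw [show (crossProduct (ω t)) (I.mulVec (ω t)) = (ω t) ⨯₃ (I.mulVec (ω t)) from rfl,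
        triple_product_eq_det, hdet]
    -- d ⬝ᵥ I d = 0
    have hquad : d ⬝ᵥ I.mulVec d = 0 := by
      have h := congrArg (fun v => d ⬝ᵥ v) (heq t)
      simp only [dotProduct_add, dotProduct_smul] at h
      rw [htriple, add_zero, dotProduct_comm d a, hda, smul_zero] at h
      exact h
    by_contra hne
    have := hpd.dotProduct_mulVec_pos hne
    simp only [star_trivial] at this
    exact absurd hquad (ne_of_gt this)
  intro t
  exact is_const_of_deriv_eq_zero hdiff hderiv0 t 0
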